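/- The subcode C' = {c ∈ C : Σ_p c_p = 0} of the line-span C of the projective plane of order 3 equals the orthogonal complement of C with respect to the standard scalar product on F₃^P. -/

import Mathlib

/-- A finite projective plane of order `n`: `n^2+n+1` points and lines,
each line has `n+1` points, each point on `n+1` lines, two points span a
unique line, two lines meet in one point. -/
structure ProjPlane (n : ℕ) where
  P : Type
  [fintypeP : Fintype P]
  [decP : DecidableEq P]
  L : Finset (Finset P)
  cardP : Fintype.card P = n ^ 2 + n + 1
  cardL : L.card = n ^ 2 + n + 1
  line_card : ∀ ℓ ∈ L, ℓ.card = n + 1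
  point_lines : ∀ p : P, (L.filter (fun ℓ => p ∈ ℓ)).card = n + 1
  unique_line : ∀ p q : P, p ≠ q → ∃! ℓ, ℓ ∈ L ∧ p ∈ ℓ ∧ q ∈ ℓ
  lines_meet : ∀ ℓ ∈ L, ∀ m ∈ L, ℓ ≠ m → (ℓ ∩ m).card = 1

attribute [instance] ProjPlane.fintypeP ProjPlane.decP

/-- The characteristic vector of a line. -/
def lineVec (Pl : ProjPlane 3) (ℓ : Finset Pl.P) : Pl.P → ZMod 3 :=
  fun p => if p ∈ ℓ then 1 else 0

/-- The F₃-span of the characteristic vectors of the lines. -/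
def lineCode (Pl : ProjPlane 3) : Submodule (ZMod 3) (Pl.P → ZMod 3) :=
  Submodule.span (ZMod 3) (lineVec Pl '' ↑Pl.L)

/-- The weight of a codeword: its number of nonzero coordinates. -/
def wt {Pl : ProjPlane 3} (c : Pl.P → ZMod 3) : ℕ :=
  (Finset.univ.filter fun p => c p ≠ 0).card

variable (Pl : ProjPlane 3)


lemma sum_lineVec {ℓ : Finset Pl.P} (hℓ : ℓ ∈ Pl.L) : ∑ p, lineVec Pl ℓ p = 1 := by
  have : ∑ p, lineVec Pl ℓ p = ((Finset.univ.filter (· ∈ ℓ)).card : ZMod 3) := by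
    simp [lineVec]
  rw [this, Finset.filter_mem_eq_inter, Finset.univ_inter, Pl.line_card ℓ hℓ]
  decide

lemma sum_lineVec_mul {ℓ m : Finset Pl.P} (hℓ : ℓ ∈ Pl.L) (hm : m ∈ Pl.L) :
    ∑ p, lineVec Pl ℓ p * lineVec Pl m p = 1 := by
  have h1 : ∑ p, lineVec Pl ℓ p * lineVec Pl m p
      = ((Finset.univ.filter (· ∈ ℓ ∩ m)).card : ZMod 3) := by
    rw [Finset.card_filter]
    push_cast
    refine Finset.sum_congr rfl fun p _ => ?_
    by_cases h1 : p ∈ ℓ <;> by_cases h2 : p ∈ m <;>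
      simp [lineVec, h1, h2, Finset.mem_inter]
  rw [h1, Finset.filter_mem_eq_inter, Finset.univ_inter]
  by_cases h : ℓ = m
  · subst h
    rw [Finset.inter_self, Pl.line_card ℓ hℓ]; decide
  · rw [Pl.lines_meet ℓ hℓ m hm h]; decide

lemma dot_lineVec_eq_sum {c : Pl.P → ZMod 3} (hc : c ∈ lineCode Pl)
    {m : Finset Pl.P} (hm : m ∈ Pl.L) :
    ∑ p, c p * lineVec Pl m p = ∑ p, c p := by
  induction hc using Submodule.span_induction with
  | mem v hv =>
    obtain ⟨ℓ, hℓ, rfl⟩ := hv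
    rw [sum_lineVec_mul Pl (Finset.mem_coe.mp hℓ) hm, sum_lineVec Pl (Finset.mem_coe.mp hℓ)]
  | zero => simp
  | add a b _ _ ha hb => simp only [Pi.add_apply, add_mul, Finset.sum_add_distrib, ha, hb]
  | smul r a _ ha =>
    simp only [Pi.smul_apply, smul_eq_mul, mul_assoc, ← Finset.mul_sum, ha]

lemma ortho_ext {w : Pl.P → ZMod 3}
    (h : ∀ ℓ ∈ Pl.L, ∑ p, w p * lineVec Pl ℓ p = 0) :
    ∀ c ∈ lineCode Pl, ∑ p, w p * c p = 0 := by
  intro c hc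
  induction hc using Submodule.span_induction with
  | mem v hv =>
    obtain ⟨ℓ, hℓ, rfl⟩ := hv
    exact h ℓ (Finset.mem_coe.mp hℓ)
  | zero => simp
  | add a b _ _ ha hb => simp only [Pi.add_apply, mul_add, Finset.sum_add_distrib, ha, hb, add_zero]
  | smul r a _ ha =>
    have he : ∀ p, w p * (r * a p) = r * (w p * a p) := fun p => by ring
    simp only [Pi.smul_apply, smul_eq_mul, he, ← Finset.mul_sum, ha, mul_zero]

noncomputable def lineMat : Matrix {ℓ // ℓ ∈ Pl.L} Pl.P (ZMod 3) :=
  fun ℓ p => lineVec Pl ℓ.1 p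

noncomputable def Kperp : Submodule (ZMod 3) (Pl.P → ZMod 3) :=
  LinearMap.ker (lineMat Pl).mulVecLin

lemma range_transpose : LinearMap.range (Matrix.mulVecLin (Matrix.transpose (lineMat Pl))) = lineCode Pl := by
  rw [Matrix.range_mulVecLin]
  congr 1
  ext v
  constructor
  · rintro ⟨ℓ, rfl⟩
    exact Set.mem_image_of_mem _ (Finset.mem_coe.mpr ℓ.2)
  · rintro ⟨ℓ, hℓ, rfl⟩
    exact ⟨⟨ℓ, Finset.mem_coe.mp hℓ⟩, rfl⟩

lemma mem_Kperp_iff (w : Pl.P → ZMod 3) :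
    w ∈ Kperp Pl ↔ ∀ c ∈ lineCode Pl, ∑ p, w p * c p = 0 := by
  constructor
  · intro hw
    apply ortho_ext
    intro ℓ hℓ
    have := congrFun (LinearMap.mem_ker.mp hw) ⟨ℓ, hℓ⟩
    simp only [Matrix.mulVecLin_apply, Matrix.mulVec, dotProduct, lineMat,
      Pi.zero_apply] at this
    rw [← this]
    exact Finset.sum_congr rfl fun p _ => mul_comm _ _
  · intro h
    simp only [Kperp, LinearMap.mem_ker]
    funext ℓ
    simp only [Matrix.mulVecLin_apply, Matrix.mulVec, dotProduct, lineMat, Pi.zero_apply]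
    have := h (lineVec Pl ℓ.1) (Submodule.subset_span (Set.mem_image_of_mem _ (Finset.mem_coe.mpr ℓ.2)))
    rw [← this]
    exact Finset.sum_congr rfl fun p _ => mul_comm _ _

lemma finrank_add_eq :
    Module.finrank (ZMod 3) (lineCode Pl) + Module.finrank (ZMod 3) (Kperp Pl) = 13 := by
  have h1 := LinearMap.finrank_range_add_finrank_ker (lineMat Pl).mulVecLin
  have h2 : Module.finrank (ZMod 3) (LinearMap.range (lineMat Pl).mulVecLin)
      = Module.finrank (ZMod 3) (lineCode Pl) := by
    have ht := Matrix.rank_transpose (lineMat Pl)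
    unfold Matrix.rank at ht
    rw [← ht, range_transpose]
  have h3 : Module.finrank (ZMod 3) (Pl.P → ZMod 3) = 13 := by
    rw [Module.finrank_pi, Pl.cardP]; norm_num
  rw [h2, h3] at h1
  exact h1

lemma line_unique {a b : Pl.P} {n n' : Finset Pl.P} (hab : a ≠ b)
    (hn : n ∈ Pl.L) (hn' : n' ∈ Pl.L) (han : a ∈ n) (hbn : b ∈ n)
    (han' : a ∈ n') (hbn' : b ∈ n') : n = n' := by
  obtain ⟨u, _, hu⟩ := Pl.unique_line a b hab
  rw [hu n ⟨hn, han, hbn⟩, hu n' ⟨hn', han', hbn'⟩]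

lemma seven_le : 7 ≤ Module.finrank (ZMod 3) (lineCode Pl) := by
  classical
  -- two distinct lines
  have hL2 : 1 < Pl.L.card := by rw [Pl.cardL]; norm_num
  obtain ⟨ℓ, hℓ, m, hm, hlm⟩ := Finset.one_lt_card.mp hL2
  -- intersection point x
  obtain ⟨x, hxcap⟩ := Finset.card_eq_one.mp (Pl.lines_meet ℓ hℓ m hm hlm)
  have hxl : x ∈ ℓ := Finset.mem_of_mem_inter_left (le_of_eq hxcap.symm (Finset.mem_singleton_self x))
  have hxm : x ∈ m := Finset.mem_of_mem_inter_right (le_of_eq hxcap.symm (Finset.mem_singleton_self x))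
  have hx_only : ∀ a, a ∈ ℓ → a ∈ m → a = x := by
    intro a h1 h2
    have : a ∈ ℓ ∩ m := Finset.mem_inter.mpr ⟨h1, h2⟩
    rw [hxcap] at this
    exact Finset.mem_singleton.mp this
  -- the other points of ℓ
  have hlc : (ℓ.erase x).card = 3 := by
    rw [Finset.card_erase_of_mem hxl, Pl.line_card ℓ hℓ]
  obtain ⟨y1, y2, y3, hy12, hy13, hy23, hyE⟩ := Finset.card_eq_three.mp hlc
  have hy1e : y1 ∈ ℓ.erase x := by rw [hyE]; simp
  have hy2e : y2 ∈ ℓ.erase x := by rw [hyE]; simp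
  have hy3e : y3 ∈ ℓ.erase x := by rw [hyE]; simp
  have hy1l : y1 ∈ ℓ := Finset.mem_of_mem_erase hy1e
  have hy2l : y2 ∈ ℓ := Finset.mem_of_mem_erase hy2e
  have hy3l : y3 ∈ ℓ := Finset.mem_of_mem_erase hy3e
  have hy1x : y1 ≠ x := Finset.ne_of_mem_erase hy1e
  have hy2x : y2 ≠ x := Finset.ne_of_mem_erase hy2e
  have hy3x : y3 ≠ x := Finset.ne_of_mem_erase hy3e
  -- the other points of m
  have hmc : (m.erase x).card = 3 := by
    rw [Finset.card_erase_of_mem hxm, Pl.line_card m hm]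
  obtain ⟨z1, z2, z3, hz12, hz13, hz23, hzE⟩ := Finset.card_eq_three.mp hmc
  have hz1e : z1 ∈ m.erase x := by rw [hzE]; simp
  have hz2e : z2 ∈ m.erase x := by rw [hzE]; simp
  have hz3e : z3 ∈ m.erase x := by rw [hzE]; simp
  have hz1m : z1 ∈ m := Finset.mem_of_mem_erase hz1e
  have hz2m : z2 ∈ m := Finset.mem_of_mem_erase hz2e
  have hz3m : z3 ∈ m := Finset.mem_of_mem_erase hz3e
  have hz1x : z1 ≠ x := Finset.ne_of_mem_erase hz1e
  have hz2x : z2 ≠ x := Finset.ne_of_mem_erase hz2e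
  have hz3x : z3 ≠ x := Finset.ne_of_mem_erase hz3e
  -- y's are not on m, z's not on ℓ
  have hy1m : y1 ∉ m := fun h => hy1x (hx_only y1 hy1l h)
  have hy2m : y2 ∉ m := fun h => hy2x (hx_only y2 hy2l h)
  have hy3m : y3 ∉ m := fun h => hy3x (hx_only y3 hy3l h)
  have hz1l : z1 ∉ ℓ := fun h => hz1x (hx_only z1 h hz1m)
  have hz2l : z2 ∉ ℓ := fun h => hz2x (hx_only z2 h hz2m)
  have hz3l : z3 ∉ ℓ := fun h => hz3x (hx_only z3 h hz3m)
  -- a third line n1 through x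
  have hfc : ((Pl.L.filter (fun n => x ∈ n)).card) = 4 := Pl.point_lines x
  have hder : 0 < (((Pl.L.filter (fun n => x ∈ n)).erase ℓ).erase m).card := by
    have h1 := Finset.pred_card_le_card_erase (s := Pl.L.filter (fun n => x ∈ n)) (a := ℓ)
    have h2 := Finset.pred_card_le_card_erase
      (s := (Pl.L.filter (fun n => x ∈ n)).erase ℓ) (a := m)
    omega
  obtain ⟨n1, hn1mem⟩ := Finset.card_pos.mp hder
  have hn1m : n1 ≠ m := (Finset.mem_erase.mp hn1mem).1
  have hn1e2 := (Finset.mem_erase.mp hn1mem).2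
  have hn1l : n1 ≠ ℓ := (Finset.mem_erase.mp hn1e2).1
  have hn1L : n1 ∈ Pl.L := (Finset.mem_filter.mp (Finset.mem_erase.mp hn1e2).2).1
  have hxn1 : x ∈ n1 := (Finset.mem_filter.mp (Finset.mem_erase.mp hn1e2).2).2
  have hy1n1 : y1 ∉ n1 := fun h =>
    hn1l (line_unique Pl hy1x hn1L hℓ h hxn1 hy1l hxl)
  have hy2n1 : y2 ∉ n1 := fun h =>
    hn1l (line_unique Pl hy2x hn1L hℓ h hxn1 hy2l hxl)
  have hy3n1 : y3 ∉ n1 := fun h =>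
    hn1l (line_unique Pl hy3x hn1L hℓ h hxn1 hy3l hxl)
  have hz1n1 : z1 ∉ n1 := fun h =>
    hn1m (line_unique Pl hz1x hn1L hm h hxn1 hz1m hxm)
  have hz2n1 : z2 ∉ n1 := fun h =>
    hn1m (line_unique Pl hz2x hn1L hm h hxn1 hz2m hxm)
  have hz3n1 : z3 ∉ n1 := fun h =>
    hn1m (line_unique Pl hz3x hn1L hm h hxn1 hz3m hxm)
  -- the four lines L i j
  have hyz : ∀ a b : Pl.P, a ∈ ℓ → a ≠ x → b ∈ m → b ≠ x → a ≠ b := by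
    intro a b ha hax hb hbx h
    exact hax (hx_only a ha (h ▸ hb))
  obtain ⟨L11, ⟨hL11L, hy1L11, hz1L11⟩, -⟩ := Pl.unique_line y1 z1 (hyz y1 z1 hy1l hy1x hz1m hz1x)
  obtain ⟨L12, ⟨hL12L, hy1L12, hz2L12⟩, -⟩ := Pl.unique_line y1 z2 (hyz y1 z2 hy1l hy1x hz2m hz2x)
  obtain ⟨L21, ⟨hL21L, hy2L21, hz1L21⟩, -⟩ := Pl.unique_line y2 z1 (hyz y2 z1 hy2l hy2x hz1m hz1x)
  obtain ⟨L22, ⟨hL22L, hy2L22, hz2L22⟩, -⟩ := Pl.unique_line y2 z2 (hyz y2 z2 hy2l hy2x hz2m hz2x)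
  -- a line through yi and zj meets ℓ only at yi, and m only at zj
  have keyl : ∀ {n : Finset Pl.P} {yi zj : Pl.P}, n ∈ Pl.L → yi ∈ n → zj ∈ n →
      yi ∈ ℓ → zj ∈ m → zj ≠ x → ∀ a ∈ n, a ∈ ℓ → a = yi := by
    intro n yi zj hn hyin hzjn hyil hzjm hzjx a han hal
    by_contra hne
    have : n = ℓ := line_unique Pl (Ne.symm hne) hn hℓ hyin han hyil hal
    exact hzjx (hx_only zj (this ▸ hzjn) hzjm)
  have keym : ∀ {n : Finset Pl.P} {yi zj : Pl.P}, n ∈ Pl.L → yi ∈ n → zj ∈ n →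
      yi ∈ ℓ → yi ≠ x → zj ∈ m → ∀ a ∈ n, a ∈ m → a = zj := by
    intro n yi zj hn hyin hzjn hyil hyix hzjm a han ham
    by_contra hne
    have : n = m := line_unique Pl (Ne.symm hne) hn hm hzjn han hzjm ham
    exact hyix (hx_only yi hyil (this ▸ hyin))
  -- membership facts at the evaluation points
  have nxL11 : x ∉ L11 := fun h => hy1x.symm (keyl hL11L hy1L11 hz1L11 hy1l hz1m hz1x x h hxl)
  have nxL12 : x ∉ L12 := fun h => hy1x.symm (keyl hL12L hy1L12 hz2L12 hy1l hz2m hz2x x h hxl)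
  have nxL21 : x ∉ L21 := fun h => hy2x.symm (keyl hL21L hy2L21 hz1L21 hy2l hz1m hz1x x h hxl)
  have nxL22 : x ∉ L22 := fun h => hy2x.symm (keyl hL22L hy2L22 hz2L22 hy2l hz2m hz2x x h hxl)
  have ny3L11 : y3 ∉ L11 := fun h => hy13.symm (keyl hL11L hy1L11 hz1L11 hy1l hz1m hz1x y3 h hy3l)
  have ny3L12 : y3 ∉ L12 := fun h => hy13.symm (keyl hL12L hy1L12 hz2L12 hy1l hz2m hz2x y3 h hy3l)
  have ny3L21 : y3 ∉ L21 := fun h => hy23.symm (keyl hL21L hy2L21 hz1L21 hy2l hz1m hz1x y3 h hy3l)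
  have ny3L22 : y3 ∉ L22 := fun h => hy23.symm (keyl hL22L hy2L22 hz2L22 hy2l hz2m hz2x y3 h hy3l)
  have nz3L11 : z3 ∉ L11 := fun h => hz13.symm (keym hL11L hy1L11 hz1L11 hy1l hy1x hz1m z3 h hz3m)
  have nz3L12 : z3 ∉ L12 := fun h => hz23.symm (keym hL12L hy1L12 hz2L12 hy1l hy1x hz2m z3 h hz3m)
  have nz3L21 : z3 ∉ L21 := fun h => hz13.symm (keym hL21L hy2L21 hz1L21 hy2l hy2x hz1m z3 h hz3m)
  have nz3L22 : z3 ∉ L22 := fun h => hz23.symm (keym hL22L hy2L22 hz2L22 hy2l hy2x hz2m z3 h hz3m)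
  have ny1L21 : y1 ∉ L21 := fun h => hy12 (keyl hL21L hy2L21 hz1L21 hy2l hz1m hz1x y1 h hy1l)
  have ny1L22 : y1 ∉ L22 := fun h => hy12 (keyl hL22L hy2L22 hz2L22 hy2l hz2m hz2x y1 h hy1l)
  have ny2L11 : y2 ∉ L11 := fun h => hy12 (keyl hL11L hy1L11 hz1L11 hy1l hz1m hz1x y2 h hy2l).symm
  have ny2L12 : y2 ∉ L12 := fun h => hy12 (keyl hL12L hy1L12 hz2L12 hy1l hz2m hz2x y2 h hy2l).symm
  have nz1L12 : z1 ∉ L12 := fun h => hz12 (keym hL12L hy1L12 hz2L12 hy1l hy1x hz2m z1 h hz1m)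
  have nz1L22 : z1 ∉ L22 := fun h => hz12 (keym hL22L hy2L22 hz2L22 hy2l hy2x hz2m z1 h hz1m)
  have nz2L11 : z2 ∉ L11 := fun h => hz12 (keym hL11L hy1L11 hz1L11 hy1l hy1x hz1m z2 h hz2m).symm
  have nz2L21 : z2 ∉ L21 := fun h => hz12 (keym hL21L hy2L21 hz1L21 hy2l hy2x hz1m z2 h hz2m).symm
  -- the extra point q on L11 off ℓ and m
  have hL11nl : L11 ≠ ℓ := fun h => hz1l (h ▸ hz1L11)
  have hL11nm : L11 ≠ m := fun h => hy1m (h ▸ hy1L11)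
  have hcap1 : (L11 ∩ ℓ).card = 1 := Pl.lines_meet L11 hL11L ℓ hℓ hL11nl
  have hcap2 : (L11 ∩ m).card = 1 := Pl.lines_meet L11 hL11L m hm hL11nm
  have hsd1 : (L11 \ ℓ).card = 3 := by
    have := Finset.card_sdiff_add_card_inter L11 ℓ
    rw [hcap1, Pl.line_card L11 hL11L] at this
    omega
  have hsd2 : 0 < ((L11 \ ℓ) \ m).card := by
    have h1 := Finset.card_sdiff_add_card_inter (L11 \ ℓ) m
    have h2 : ((L11 \ ℓ) ∩ m).card ≤ 1 := by
      rw [← hcap2]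
      exact Finset.card_le_card (Finset.inter_subset_inter_right (Finset.sdiff_subset))
    omega
  obtain ⟨q, hqmem⟩ := Finset.card_pos.mp hsd2
  have hq1 := Finset.mem_sdiff.mp hqmem
  have hqL11 : q ∈ L11 := (Finset.mem_sdiff.mp hq1.1).1
  have hql : q ∉ ℓ := (Finset.mem_sdiff.mp hq1.1).2
  have hqm : q ∉ m := hq1.2
  have hqy1 : q ≠ y1 := fun h => hql (h ▸ hy1l)
  have hqz1 : q ≠ z1 := fun h => hqm (h ▸ hz1m)
  have hqL12 : q ∉ L12 := by
    intro h
    have hEq : L11 = L12 := line_unique Pl hqy1 hL11L hL12L hqL11 hy1L11 h hy1L12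
    exact nz2L11 (hEq ▸ hz2L12)
  have hqL21 : q ∉ L21 := by
    intro h
    have hEq : L11 = L21 := line_unique Pl hqz1 hL11L hL21L hqL11 hz1L11 h hz1L21
    exact ny2L11 (hEq ▸ hy2L21)
  -- linear independence of the seven characteristic vectors
  set v : Fin 7 → (Pl.P → ZMod 3) :=
    ![lineVec Pl ℓ, lineVec Pl m, lineVec Pl n1, lineVec Pl L11,
      lineVec Pl L12, lineVec Pl L21, lineVec Pl L22] with hv
  have hli : LinearIndependent (ZMod 3) v := by
    rw [Fintype.linearIndependent_iff]
    intro g hg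
    have ev : ∀ p : Pl.P, g 0 * lineVec Pl ℓ p + g 1 * lineVec Pl m p + g 2 * lineVec Pl n1 p
        + g 3 * lineVec Pl L11 p + g 4 * lineVec Pl L12 p + g 5 * lineVec Pl L21 p
        + g 6 * lineVec Pl L22 p = 0 := by
      intro p
      have h2 := congrFun hg p
      rw [Finset.sum_apply, Fin.sum_univ_seven] at h2
      exact h2
    have ey3 := ev y3
    simp only [lineVec, hy3l, hy3m, hy3n1, ny3L11, ny3L12, ny3L21, ny3L22,
      if_true, if_false, mul_one, mul_zero, add_zero, zero_add, if_pos, if_neg,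
      ite_true, ite_false, eq_self_iff_true, not_false_iff] at ey3
    have ez3 := ev z3
    simp only [lineVec, hz3l, hz3m, hz3n1, nz3L11, nz3L12, nz3L21, nz3L22,
      ite_true, ite_false, if_true, if_false, mul_one, mul_zero, add_zero, zero_add] at ez3
    have ex := ev x
    simp only [lineVec, hxl, hxm, hxn1, nxL11, nxL12, nxL21, nxL22,
      ite_true, ite_false, if_true, if_false, mul_one, mul_zero, add_zero, zero_add] at ex
    have ey1 := ev y1
    simp only [lineVec, hy1l, hy1m, hy1n1, hy1L11, hy1L12, ny1L21, ny1L22,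
      ite_true, ite_false, if_true, if_false, mul_one, mul_zero, add_zero, zero_add] at ey1
    have ey2 := ev y2
    simp only [lineVec, hy2l, hy2m, hy2n1, ny2L11, ny2L12, hy2L21, hy2L22,
      ite_true, ite_false, if_true, if_false, mul_one, mul_zero, add_zero, zero_add] at ey2
    have ez1 := ev z1
    simp only [lineVec, hz1l, hz1m, hz1n1, hz1L11, nz1L12, hz1L21, nz1L22,
      ite_true, ite_false, if_true, if_false, mul_one, mul_zero, add_zero, zero_add] at ez1
    have ez2 := ev z2
    simp only [lineVec, hz2l, hz2m, hz2n1, nz2L11, hz2L12, nz2L21, hz2L22,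
      ite_true, ite_false, if_true, if_false, mul_one, mul_zero, add_zero, zero_add] at ez2
    have h0 : g 0 = 0 := by linear_combination ey3
    have h1 : g 1 = 0 := by linear_combination ez3
    have h2 : g 2 = 0 := by linear_combination ex - h0 - h1
    have h33 : (3 : ZMod 3) = 0 := by decide
    have h3 : g 3 = 0 := by
      have eq := ev q
      by_cases hqn1 : q ∈ n1 <;> by_cases hq22 : q ∈ L22 <;>
        simp only [lineVec, hql, hqm, hqn1, hqL11, hqL12, hqL21, hq22,
          ite_true, ite_false, if_true, if_false, mul_one, mul_zero, add_zero, zero_add] at eq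
      · linear_combination 2*eq - 2*ey2 + 2*ez1 - 2*h2 + 2*h0 - 2*h1 - g 3 * h33
      · linear_combination eq - h2
      · linear_combination 2*eq - 2*ey2 + 2*ez1 + 2*h0 - 2*h1 - g 3 * h33
      · linear_combination eq
    have h4 : g 4 = 0 := by linear_combination ey1 - h0 - h3
    have h5 : g 5 = 0 := by linear_combination ez1 - h1 - h3
    have h6 : g 6 = 0 := by linear_combination ey2 - h0 - h5
    intro i
    fin_cases i
    exacts [h0, h1, h2, h3, h4, h5, h6]
  have hspan := finrank_span_eq_card hli
  have hsub : Submodule.span (ZMod 3) (Set.range v) ≤ lineCode Pl := by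
    rw [Submodule.span_le]
    rintro - ⟨i, rfl⟩
    fin_cases i <;>
      exact Submodule.subset_span (Set.mem_image_of_mem _ (Finset.mem_coe.mpr (by assumption)))
  calc (7 : ℕ) = Fintype.card (Fin 7) := by simp
    _ = Module.finrank (ZMod 3) (Submodule.span (ZMod 3) (Set.range v)) := hspan.symm
    _ ≤ Module.finrank (ZMod 3) (lineCode Pl) := Submodule.finrank_mono hsub

noncomputable def sumFun : (Pl.P → ZMod 3) →ₗ[ZMod 3] ZMod 3 :=
  ∑ p, LinearMap.proj p

lemma sumFun_apply (w : Pl.P → ZMod 3) : sumFun Pl w = ∑ p, w p := by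
  simp [sumFun]

theorem stmt9' (w : Pl.P → ZMod 3) :
    (w ∈ lineCode Pl ∧ ∑ p, w p = 0) ↔
      (∀ c ∈ lineCode Pl, ∑ p, w p * c p = 0) := by
  constructor
  · rintro ⟨hwC, hws⟩
    apply ortho_ext
    intro ℓ hℓ
    rw [dot_lineVec_eq_sum Pl hwC hℓ, hws]
  · intro h
    -- D = C ⊓ ker(sum) equals Kperp by dimension count
    set D : Submodule (ZMod 3) (Pl.P → ZMod 3) := lineCode Pl ⊓ LinearMap.ker (sumFun Pl) with hD
    have hDK : D ≤ Kperp Pl := by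
      intro u hu
      rw [mem_Kperp_iff]
      apply ortho_ext
      intro ℓ hℓ
      rw [dot_lineVec_eq_sum Pl hu.1 hℓ, ← sumFun_apply, LinearMap.mem_ker.mp hu.2]
    -- finrank D ≥ finrank C - 1
    have hf1 : Module.finrank (ZMod 3) (lineCode Pl) ≤ Module.finrank (ZMod 3) D + 1 := by
      set f : lineCode Pl →ₗ[ZMod 3] ZMod 3 := (sumFun Pl).comp (lineCode Pl).subtype with hfdef
      have hrn := LinearMap.finrank_range_add_finrank_ker f
      have hrle : Module.finrank (ZMod 3) (LinearMap.range f) ≤ 1 := by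
        have := Submodule.finrank_le (LinearMap.range f)
        rwa [Module.finrank_self] at this
      have hker : Module.finrank (ZMod 3) (LinearMap.ker f)
          = Module.finrank (ZMod 3) D := by
        have hmap : Submodule.map (lineCode Pl).subtype (LinearMap.ker f) = D := by
          rw [hfdef, LinearMap.ker_comp, Submodule.map_comap_subtype, hD, inf_comm]
        rw [← hmap, Submodule.finrank_map_subtype_eq]
      omega
    have h7 := seven_le Pl
    have hsum := finrank_add_eq Pl
    have hKD : Module.finrank (ZMod 3) (Kperp Pl) ≤ Module.finrank (ZMod 3) D := by omega
    have heq : D = Kperp Pl := Submodule.eq_of_le_of_finrank_le hDK hKD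
    have hw : w ∈ D := by
      rw [heq, mem_Kperp_iff]
      exact h
    refine ⟨hw.1, ?_⟩
    rw [← sumFun_apply, LinearMap.mem_ker.mp hw.2]

/-- `C' = {c ∈ C : Σ c_p = 0}` equals the orthogonal complement of `C`. -/
theorem stmt9 (Pl : ProjPlane 3) (w : Pl.P → ZMod 3) :
    (w ∈ lineCode Pl ∧ ∑ p, w p = 0) ↔
      (∀ c ∈ lineCode Pl, ∑ p, w p * c p = 0) := stmt9' Pl w
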